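/- Adopt the directional pattern setup, assume Condition (C), define n_B = L·φ_B/π − 1 and f_N(φ) = Σ_{l=N}^{L−1} G_l(φ). Let N be an integer with 1 ≤ N ≤ L−1. Then f_N(φ) > (L − N)·G_SL for all φ ∈ I_{0,M}^c(N), where I_{0,M}^c(N) = [(N−1)·2π/L + φ_B, 2π − φ_B] when L − N ≥ n_B and I_{0,M}^c(N) = [2π − φ_B, (N−1)·2π/L + φ_B] when L − N < n_B. -/

import Mathlib

/-- Appendix Lemma 5, property (v): under Condition (C),
for `1 ≤ N ≤ L−1`, on the middle interval `I_{0,M}^c(N)` one has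
`f_N(φ) > (L−N)·G_SL`. -/
theorem stmt11
(L : ℕ) (hL : 2 ≤ L)
    (G : ℝ → ℝ) (hGnn : ∀ φ, 0 ≤ G φ)
    (hGper : ∀ φ, G (φ + 2 * Real.pi) = G φ)
    (GSL φB : ℝ) (hGSL : 0 ≤ GSL)
    (hφB0 : 0 < φB) (hφBhalf : φB < Real.pi / 2)
    (hmain : ∀ φ ∈ Set.Ioo (-φB) φB, GSL < G φ)
    (hside : ∀ φ : ℝ, φB ≤ |φ| → |φ| ≤ Real.pi → G φ ≤ GSL)
    (Gl : ℕ → ℝ → ℝ)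
    (hGl : ∀ l φ, Gl l φ = G (φ - l * (2 * Real.pi) / L))
(nB : ℝ) (hnB : nB = L * φB / Real.pi - 1)
(f : ℕ → ℝ → ℝ)
    (hf : ∀ N φ, f N φ = ∑ l ∈ Finset.Ico N L, Gl l φ)
-- Condition (C)
    (hC : GSL < ((L / 2 : ℕ) : ℝ) / (((L + 1) / 2 : ℕ) : ℝ) *
      sInf ((fun φ => (1 / ((L : ℝ) - 1)) * ∑ l ∈ Finset.range (L - 1), Gl l φ) ''
        Set.Icc (φB - 2 * Real.pi / L) (((L : ℝ) - 1) * (2 * Real.pi) / L - φB))) :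
    ∀ N : ℕ, 1 ≤ N → N ≤ L - 1 →
      ∀ φ ∈ (if nB ≤ (L : ℝ) - N then
          Set.Icc (((N : ℝ) - 1) * (2 * Real.pi) / L + φB) (2 * Real.pi - φB)
        else
          Set.Icc (2 * Real.pi - φB) (((N : ℝ) - 1) * (2 * Real.pi) / L + φB)),
        ((L : ℝ) - N) * GSL < f N φ := by
  intro N hN1 hNL φ hφ
  have hNltL : N < L := by omega
  have hπ : (0:ℝ) < Real.pi := Real.pi_pos
  have hLpos : (0:ℝ) < (L:ℝ) := by exact_mod_cast Nat.pos_of_ne_zero (by omega)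
  have hL0 : ((L:ℝ)) ≠ 0 := ne_of_gt hLpos
  obtain ⟨t, ht_def⟩ : ∃ t : ℝ, t = 2 * Real.pi / (L:ℝ) := ⟨_, rfl⟩
  have ht : (0:ℝ) < t := by rw [ht_def]; positivity
  have hLt : (L:ℝ) * t = 2 * Real.pi := by
    rw [ht_def]; field_simp
  have hN1R : (1:ℝ) ≤ (N:ℝ) := by exact_mod_cast hN1
  have hNR_lt : (N:ℝ) ≤ (L:ℝ) - 1 := by
    have h : ((N:ℝ)) + 1 ≤ (L:ℝ) := by exact_mod_cast (by omega : N + 1 ≤ L)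
    linarith
  have hNt : t ≤ (N:ℝ) * t := le_mul_of_one_le_left ht.le hN1R
  by_cases hcase : nB ≤ (L : ℝ) - N
  · -- Case 1: use Condition (C)
    rw [if_pos hcase] at hφ
    obtain ⟨hφ1, hφ2⟩ := hφ
    have hφ1' : (N:ℝ) * t - t + φB ≤ φ := by
      have e : ((N:ℝ) - 1) * (2 * Real.pi) / (L:ℝ) = (N:ℝ) * t - t := by
        rw [ht_def]; ring
      rw [e] at hφ1; linarith
    obtain ⟨φ0, hφ0_def⟩ : ∃ x : ℝ, x = φ - (N:ℝ) * t := ⟨_, rfl⟩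
    -- φ0 is in the (C)-interval
    have hmemIcc : φ0 ∈ Set.Icc (φB - 2 * Real.pi / (L:ℝ))
        (((L : ℝ) - 1) * (2 * Real.pi) / L - φB) := by
      constructor
      · rw [← ht_def]; linarith [hφ0_def]
      · have e2 : ((L : ℝ) - 1) * (2 * Real.pi) / (L:ℝ) = (L:ℝ) * t - t := by
          rw [ht_def]; ring
        rw [e2]; linarith [hφ0_def, hLt]
    -- nonnegativity of the averaged sum
    have hLm1 : (0:ℝ) < (L:ℝ) - 1 := by linarith
    have hvnn : ∀ x : ℝ, 0 ≤ (1 / ((L : ℝ) - 1)) * ∑ l ∈ Finset.range (L - 1), Gl l x := by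
      intro x
      apply mul_nonneg (by positivity)
      apply Finset.sum_nonneg
      intro l _
      rw [hGl]; exact hGnn _
    have hbdd : BddBelow ((fun φ => (1 / ((L : ℝ) - 1)) * ∑ l ∈ Finset.range (L - 1), Gl l φ) ''
        Set.Icc (φB - 2 * Real.pi / L) (((L : ℝ) - 1) * (2 * Real.pi) / L - φB)) := by
      refine ⟨0, ?_⟩
      rintro y ⟨x, -, rfl⟩
      exact hvnn x
    have hinf_le : sInf ((fun φ => (1 / ((L : ℝ) - 1)) * ∑ l ∈ Finset.range (L - 1), Gl l φ) ''
          Set.Icc (φB - 2 * Real.pi / L) (((L : ℝ) - 1) * (2 * Real.pi) / L - φB))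
        ≤ (1 / ((L : ℝ) - 1)) * ∑ l ∈ Finset.range (L - 1), Gl l φ0 :=
      csInf_le hbdd ⟨φ0, hmemIcc, rfl⟩
    -- the constant c = ⌊L/2⌋/⌈L/2⌉ is in (0,1]
    have hden : (0:ℝ) < (((L + 1) / 2 : ℕ) : ℝ) := by
      exact_mod_cast Nat.pos_of_ne_zero (by omega)
    have hc_nonneg : (0:ℝ) ≤ ((L / 2 : ℕ) : ℝ) / (((L + 1) / 2 : ℕ) : ℝ) := by positivity
    have hc_le_one : ((L / 2 : ℕ) : ℝ) / (((L + 1) / 2 : ℕ) : ℝ) ≤ 1 := by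
      rw [div_le_one hden]
      exact_mod_cast Nat.div_le_div_right (Nat.le_succ L)
    have hkey : GSL < (1 / ((L : ℝ) - 1)) * ∑ l ∈ Finset.range (L - 1), Gl l φ0 := by
      calc GSL < ((L / 2 : ℕ) : ℝ) / (((L + 1) / 2 : ℕ) : ℝ) *
            sInf ((fun φ => (1 / ((L : ℝ) - 1)) * ∑ l ∈ Finset.range (L - 1), Gl l φ) ''
              Set.Icc (φB - 2 * Real.pi / L) (((L : ℝ) - 1) * (2 * Real.pi) / L - φB)) := hC
        _ ≤ ((L / 2 : ℕ) : ℝ) / (((L + 1) / 2 : ℕ) : ℝ) *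
            ((1 / ((L : ℝ) - 1)) * ∑ l ∈ Finset.range (L - 1), Gl l φ0) :=
            mul_le_mul_of_nonneg_left hinf_le hc_nonneg
        _ ≤ (1 / ((L : ℝ) - 1)) * ∑ l ∈ Finset.range (L - 1), Gl l φ0 :=
            mul_le_of_le_one_left (hvnn φ0) hc_le_one
    have hsumBig : ((L:ℝ) - 1) * GSL < ∑ l ∈ Finset.range (L - 1), Gl l φ0 := by
      have h1 : GSL < (∑ l ∈ Finset.range (L - 1), Gl l φ0) / ((L:ℝ) - 1) := by
        rw [div_eq_inv_mul, ← one_div]; exact hkey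
      rw [lt_div_iff₀ hLm1] at h1
      linarith
    -- sum decomposition
    have hsplit : ∑ j ∈ Finset.range (L - 1), Gl j φ0
        = (∑ l ∈ Finset.Ico N L, Gl l φ) + ∑ i ∈ Finset.range (N - 1), Gl i φ := by
      have hLN1 : L - N ≤ L - 1 := by omega
      rw [Finset.range_eq_Ico,
        ← Finset.sum_Ico_consecutive (fun j => Gl j φ0) (Nat.zero_le (L - N)) hLN1]
      congr 1
      · rw [← Finset.range_eq_Ico, Finset.sum_Ico_eq_sum_range]
        apply Finset.sum_congr rfl
        intro i _
        rw [hGl, hGl]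
        congr 1
        push_cast
        rw [hφ0_def, ht_def]
        ring
      · rw [Finset.sum_Ico_eq_sum_range]
        have hidx : L - 1 - (L - N) = N - 1 := by omega
        rw [hidx]
        apply Finset.sum_congr rfl
        intro i _
        rw [hGl, hGl]
        have hcast : ((L - N + i : ℕ) : ℝ) = (L:ℝ) - (N:ℝ) + (i:ℝ) := by
          push_cast [Nat.cast_sub (le_of_lt hNltL)]
          ring
        have harg : φ0 - ((L - N + i : ℕ) : ℝ) * (2 * Real.pi) / (L:ℝ)
            = (φ - (i:ℝ) * (2 * Real.pi) / (L:ℝ)) - 2 * Real.pi := by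
          rw [hcast, hφ0_def, ht_def]
          field_simp
          ring
        rw [harg]
        have hper := hGper (φ - (i:ℝ) * (2 * Real.pi) / (L:ℝ) - 2 * Real.pi)
        rw [show φ - (i:ℝ) * (2 * Real.pi) / (L:ℝ) - 2 * Real.pi + 2 * Real.pi
            = φ - (i:ℝ) * (2 * Real.pi) / (L:ℝ) by ring] at hper
        exact hper.symm
    -- side-lobe bound for the removed indices
    have hSide : ∀ i ∈ Finset.range (N - 1), Gl i φ ≤ GSL := by
      intro i hi
      rw [Finset.mem_range] at hi
      have hiN : i + 2 ≤ N := by omega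
      have hiR : (i:ℝ) ≤ (N:ℝ) - 1 := by
        have : (i:ℝ) + 2 ≤ (N:ℝ) := by exact_mod_cast hiN
        linarith
      rw [hGl]
      have hieq : (i:ℝ) * (2 * Real.pi) / (L:ℝ) = (i:ℝ) * t := by rw [ht_def]; ring
      rw [hieq]
      have hit : (i:ℝ) * t ≤ ((N:ℝ) - 1) * t := mul_le_mul_of_nonneg_right hiR ht.le
      have hit0 : 0 ≤ (i:ℝ) * t := by positivity
      set u : ℝ := φ - (i:ℝ) * t with hu_def
      have hu1 : φB ≤ u := by rw [hu_def]; nlinarith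
      have hu2 : u ≤ 2 * Real.pi - φB := by rw [hu_def]; linarith
      rcases le_or_gt u Real.pi with h | h
      · apply hside u
        · rw [abs_of_nonneg (by linarith)]; exact hu1
        · rw [abs_of_nonneg (by linarith)]; exact h
      · have hper := hGper (u - 2 * Real.pi)
        rw [show u - 2 * Real.pi + 2 * Real.pi = u by ring] at hper
        rw [hper]
        apply hside
        · rw [abs_of_nonpos (by linarith)]; linarith
        · rw [abs_of_nonpos (by linarith)]; linarith
    have hsumSide : ∑ i ∈ Finset.range (N - 1), Gl i φ ≤ ((N:ℝ) - 1) * GSL := by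
      calc ∑ i ∈ Finset.range (N - 1), Gl i φ ≤ ∑ _i ∈ Finset.range (N - 1), GSL :=
            Finset.sum_le_sum hSide
        _ = ((N - 1 : ℕ) : ℝ) * GSL := by
            rw [Finset.sum_const, Finset.card_range, nsmul_eq_mul]
        _ = ((N:ℝ) - 1) * GSL := by
            rw [Nat.cast_sub hN1, Nat.cast_one]
    rw [hf]
    have heq := hsplit ▸ hsumBig
    linarith
  · -- Case 2: every kept term is strictly inside the main lobe
    rw [if_neg hcase] at hφ
    obtain ⟨hφ1, hφ2⟩ := hφ
    have hφ2' : φ ≤ (N:ℝ) * t - t + φB := by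
      have e : ((N:ℝ) - 1) * (2 * Real.pi) / (L:ℝ) = (N:ℝ) * t - t := by
        rw [ht_def]; ring
      rw [e] at hφ2; linarith
    rw [hf]
    have hterm : ∀ l ∈ Finset.Ico N L, GSL < Gl l φ := by
      intro l hl
      rw [Finset.mem_Ico] at hl
      obtain ⟨hlN, hlL⟩ := hl
      have hlNR : (N:ℝ) ≤ (l:ℝ) := by exact_mod_cast hlN
      have hlLR : (l:ℝ) ≤ (L:ℝ) - 1 := by
        have h : ((l:ℝ)) + 1 ≤ (L:ℝ) := by exact_mod_cast (by omega : l + 1 ≤ L)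
        linarith
      rw [hGl]
      have hieq : (l:ℝ) * (2 * Real.pi) / (L:ℝ) = (l:ℝ) * t := by rw [ht_def]; ring
      rw [hieq]
      apply hmain
      constructor
      · have h1 : (l:ℝ) * t ≤ ((L:ℝ) - 1) * t := mul_le_mul_of_nonneg_right hlLR ht.le
        have h2 : ((L:ℝ) - 1) * t = 2 * Real.pi - t := by linear_combination hLt
        linarith
      · have h1 : (N:ℝ) * t ≤ (l:ℝ) * t := mul_le_mul_of_nonneg_right hlNR ht.le
        linarith
    have hcard : (Finset.Ico N L).card = L - N := Nat.card_Ico N L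
    have hne : (Finset.Ico N L).Nonempty := ⟨N, Finset.mem_Ico.mpr ⟨le_refl N, hNltL⟩⟩
    calc ((L : ℝ) - N) * GSL = ∑ _l ∈ Finset.Ico N L, GSL := by
          rw [Finset.sum_const, hcard, nsmul_eq_mul, Nat.cast_sub (le_of_lt hNltL)]
      _ < ∑ l ∈ Finset.Ico N L, Gl l φ := Finset.sum_lt_sum_of_nonempty hne hterm
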